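/- Let d and g be integers with 2 ≤ g ≤ 2d. Then the product ideals J·(f) and I·(f) of ℂ[x_{ij}] have the same radical: √(J·(f)) = √(I·(f)), where (f) denotes the principal ideal generated by f. Equivalently, the ideals J·(f) and I·(f) have the same zero locus in affine space ℂ^{g×2d}. -/

import Mathlib

open MvPolynomial Matrix

/-- The map `Fin (g-1) → Fin g` skipping the index `i` (deleting the `i`-th row). -/
def rowDelete {g : ℕ} (i : Fin g) : Fin (g - 1) → Fin g :=
  fun j => if (j : ℕ) < (i : ℕ) then ⟨j, lt_of_lt_of_le j.isLt (Nat.sub_le g 1)⟩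
    else ⟨(j : ℕ) + 1, by have := j.isLt; omega⟩

/-- The generic `g × 2d` matrix `M = (x_{ij})` over `ℂ[x_{ij}]`. -/
noncomputable def genericMatrix (g d : ℕ) :
    Matrix (Fin g) (Fin (2 * d)) (MvPolynomial (Fin g × Fin (2 * d)) ℂ) :=
  fun i j => X (i, j)

/-- The ideal `I` generated by all `g × g` minors of `M`. -/
noncomputable def idealI (g d : ℕ) : Ideal (MvPolynomial (Fin g × Fin (2 * d)) ℂ) :=
  Ideal.span { p | ∃ c : Fin g → Fin (2 * d), StrictMono c ∧
    p = ((genericMatrix g d).submatrix id c).det }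

/-- The ideal `J` generated by the minors `det M_{(1,…,g-1,i)}` for `g ≤ i ≤ 2d`
(here written 0-indexed: columns `0,…,g-2` together with a column `i` with
`g - 1 ≤ i`). -/
noncomputable def idealJ (g d : ℕ) (hgd : g ≤ 2 * d) :
    Ideal (MvPolynomial (Fin g × Fin (2 * d)) ℂ) :=
  Ideal.span { p | ∃ i : Fin (2 * d), g - 1 ≤ (i : ℕ) ∧
    p = ((genericMatrix g d).submatrix id
      (fun k : Fin g => if (k : ℕ) < g - 1 then Fin.castLE hgd k else i)).det }

/-- `f` is the product of the `(g-1) × (g-1)` minors of the submatrix `N` of `M`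
consisting of the first `g - 1` columns (one minor for each deleted row). -/
noncomputable def theF (g d : ℕ) (hgd : g ≤ 2 * d) :
    MvPolynomial (Fin g × Fin (2 * d)) ℂ :=
  ∏ i : Fin g,
    ((genericMatrix g d).submatrix (rowDelete i)
      (fun j : Fin (g - 1) => Fin.castLE (le_trans (Nat.sub_le g 1) hgd) j)).det

/- ------------------------------------------------------------------ -/
/- Auxiliary lemmas -/

lemma myZeroLocus_mul {σ : Type*} (I J : Ideal (MvPolynomial σ ℂ)) :
    MvPolynomial.zeroLocus ℂ (I * J) =
      MvPolynomial.zeroLocus ℂ I ∪ MvPolynomial.zeroLocus ℂ J := by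
  apply Set.Subset.antisymm
  · intro x hx
    by_cases hI : x ∈ MvPolynomial.zeroLocus ℂ I
    · exact Or.inl hI
    · right
      rw [mem_zeroLocus_iff] at hI
      push_neg at hI
      obtain ⟨p, hpI, hp⟩ := hI
      intro q hq
      have h := hx (p * q) (Ideal.mul_mem_mul hpI hq)
      rw [_root_.map_mul] at h
      exact (mul_eq_zero.mp h).resolve_left hp
  · rintro x (hx | hx)
    · exact MvPolynomial.zeroLocus_anti_mono Ideal.mul_le_left hx
    · exact MvPolynomial.zeroLocus_anti_mono Ideal.mul_le_right hx

lemma myJ_le_I (g d : ℕ) (hgd : g ≤ 2 * d) : idealJ g d hgd ≤ idealI g d := by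
  rw [idealJ, Ideal.span_le]
  rintro p ⟨i, hi, rfl⟩
  apply Ideal.subset_span
  refine ⟨_, ?_, rfl⟩
  intro a b hab
  dsimp only
  rw [Fin.lt_def] at hab
  have ha := a.isLt
  have hb := b.isLt
  split_ifs with h1 h2 h2 <;> simp only [Fin.lt_def, Fin.coe_castLE] <;> omega

lemma key_zeroLocus (g d : ℕ) (hg : 2 ≤ g) (hgd : g ≤ 2 * d)
    (x : Fin g × Fin (2 * d) → ℂ)
    (hJ : x ∈ MvPolynomial.zeroLocus ℂ (idealJ g d hgd))
    (hf : eval x (theF g d hgd) ≠ 0) :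
    x ∈ MvPolynomial.zeroLocus ℂ (idealI g d) := by
  obtain ⟨m, rfl⟩ : ∃ m, g = m + 2 := ⟨g - 2, by omega⟩
  have h' : m + 1 ≤ 2 * d := by omega
  set A : Matrix (Fin (m + 2)) (Fin (2 * d)) ℂ := fun i j => x (i, j) with hA
  -- evaluation of minors
  have heval : ∀ {n : ℕ} (r : Fin n → Fin (m + 2)) (c : Fin n → Fin (2 * d)),
      eval x (((genericMatrix (m + 2) d).submatrix r c).det) = (A.submatrix r c).det := by
    intro n r c
    rw [RingHom.map_det]
    congr 1
    ext i j
    simp [genericMatrix, hA]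
    rfl
  -- each (g-1)-minor of the first columns is nonzero at x
  have hfactors : ∀ r : Fin (m + 2),
      (A.submatrix (rowDelete r) (fun t : Fin (m + 1) => Fin.castLE h' t)).det ≠ 0 := by
    intro r h0
    apply hf
    rw [theF, map_prod]
    refine Finset.prod_eq_zero (Finset.mem_univ r) ?_
    rw [heval]
    exact h0
  -- the span of the first m+1 columns
  set W : Submodule ℂ (Fin (m + 2) → ℂ) :=
    Submodule.span ℂ (Set.range fun t : Fin (m + 1) =>
      (fun i => A i (Fin.castLE h' t) : Fin (m + 2) → ℂ)) with hW
  -- every column lies in W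
  have hcolW : ∀ j : Fin (2 * d), (fun i => A i j) ∈ W := by
    intro j
    by_cases hj : (j : ℕ) < m + 1
    · apply Submodule.subset_span
      refine ⟨⟨(j : ℕ), hj⟩, ?_⟩
      funext i
      rfl
    · push_neg at hj
      set cJ : Fin (m + 2) → Fin (2 * d) :=
        fun k => if (k : ℕ) < m + 1 then Fin.castLE hgd k else j with hcJ
      have hc1 : ∀ t : Fin (m + 1), cJ t.castSucc = Fin.castLE h' t := by
        intro t
        have ht : ((t.castSucc : Fin (m + 2)) : ℕ) < m + 1 := by
          simp only [Fin.coe_castSucc]; exact t.isLt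
        simp only [hcJ, if_pos ht]
        exact Fin.ext rfl
      have hc2 : cJ (Fin.last (m + 1)) = j := by
        simp [hcJ]
      have hΔ : (A.submatrix id cJ).det = 0 := by
        rw [← heval]
        apply hJ
        apply Ideal.subset_span
        exact ⟨j, hj, rfl⟩
      obtain ⟨v, hv0, hveq⟩ := Matrix.exists_mulVec_eq_zero_iff.mpr hΔ
      have hrel : ∀ i : Fin (m + 2),
          (∑ t : Fin (m + 1), A i (Fin.castLE h' t) * v t.castSucc)
            + A i j * v (Fin.last (m + 1)) = 0 := by
        intro i
        have h0 := congrFun hveq i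
        simp only [Matrix.mulVec, dotProduct, Matrix.submatrix_apply, id_eq,
          Pi.zero_apply] at h0
        rw [Fin.sum_univ_castSucc] at h0
        simpa only [hc1, hc2] using h0
      by_cases hL : v (Fin.last (m + 1)) = 0
      · exfalso
        refine hfactors 0 ?_
        rw [← Matrix.exists_mulVec_eq_zero_iff]
        have hexists : ∃ t : Fin (m + 1), v t.castSucc ≠ 0 := by
          by_contra hall
          push_neg at hall
          apply hv0
          funext k
          rcases Fin.eq_castSucc_or_eq_last k with ⟨t, rfl⟩ | rfl
          · exact hall t
          · exact hL
        refine ⟨fun t => v t.castSucc, ?_, ?_⟩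
        · intro h
          obtain ⟨t, ht⟩ := hexists
          exact ht (congrFun h t)
        · funext s
          have h0 := hrel (rowDelete 0 s)
          rw [hL, mul_zero, add_zero] at h0
          simp only [Matrix.mulVec, dotProduct, Matrix.submatrix_apply, Pi.zero_apply]
          exact h0
      · -- the last coefficient is nonzero: column j in W
        have hcolj : (fun i => A i j) =
            (-(v (Fin.last (m + 1)))⁻¹) •
              ∑ t : Fin (m + 1), v t.castSucc •
                (fun i => A i (Fin.castLE h' t) : Fin (m + 2) → ℂ) := by
          funext i
          have h0 := hrel i
          simp only [Pi.smul_apply, Finset.sum_apply, smul_eq_mul]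
          have hcomm : (∑ t : Fin (m + 1), v t.castSucc * A i (Fin.castLE h' t))
              = ∑ t : Fin (m + 1), A i (Fin.castLE h' t) * v t.castSucc :=
            Finset.sum_congr rfl fun t _ => mul_comm _ _
          rw [hcomm]
          have hS : (∑ t : Fin (m + 1), A i (Fin.castLE h' t) * v t.castSucc)
              = -(A i j * v (Fin.last (m + 1))) := by linear_combination h0
          rw [hS]
          field_simp
        rw [hcolj]
        exact Submodule.smul_mem _ _ (Submodule.sum_mem _ fun t _ =>
          Submodule.smul_mem _ _ (Submodule.subset_span ⟨t, rfl⟩))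
  -- now every g × g minor vanishes at x
  suffices h : idealI (m + 2) d ≤ RingHom.ker (eval x) by
    intro p hp
    exact h hp
  rw [idealI, Ideal.span_le]
  rintro p ⟨c, hc, rfl⟩
  rw [SetLike.mem_coe, RingHom.mem_ker, heval]
  by_contra hdet
  have hind : LinearIndependent ℂ
      (fun k : Fin (m + 2) => (fun i => A i (c k) : Fin (m + 2) → ℂ)) := by
    rw [Fintype.linearIndependent_iff]
    intro w hw k0
    by_contra hk
    apply hdet
    rw [← Matrix.exists_mulVec_eq_zero_iff]
    refine ⟨w, fun h => hk (congrFun h k0), ?_⟩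
    funext i
    have h0 := congrFun hw i
    simp only [Finset.sum_apply, Pi.smul_apply, smul_eq_mul, Pi.zero_apply] at h0
    simp only [Matrix.mulVec, dotProduct, Matrix.submatrix_apply, id_eq,
      Pi.zero_apply]
    rw [← h0]
    exact Finset.sum_congr rfl fun t _ => mul_comm _ _
  have h1 : Module.finrank ℂ (Submodule.span ℂ
      (Set.range fun k : Fin (m + 2) => (fun i => A i (c k) : Fin (m + 2) → ℂ))) = m + 2 := by
    rw [finrank_span_eq_card hind, Fintype.card_fin]
  have h2 : Submodule.span ℂ
      (Set.range fun k : Fin (m + 2) => (fun i => A i (c k) : Fin (m + 2) → ℂ)) ≤ W := by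
    rw [Submodule.span_le]
    rintro _ ⟨k, rfl⟩
    exact hcolW (c k)
  have h3 : Module.finrank ℂ W ≤ m + 1 := by
    have h4 := finrank_range_le_card (R := ℂ) (fun t : Fin (m + 1) =>
      (fun i => A i (Fin.castLE h' t) : Fin (m + 2) → ℂ))
    simpa [Set.finrank, Fintype.card_fin] using h4
  have h5 := Submodule.finrank_mono h2
  omega

/-- The product ideals `J·(f)` and `I·(f)` have the same radical. -/
theorem radical_Jf_eq_radical_If (g d : ℕ) (hg : 2 ≤ g) (hgd : g ≤ 2 * d) :
    (idealJ g d hgd * Ideal.span {theF g d hgd}).radical =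
      (idealI g d * Ideal.span {theF g d hgd}).radical := by
  rw [← vanishingIdeal_zeroLocus_eq_radical (K := ℂ), ← vanishingIdeal_zeroLocus_eq_radical (K := ℂ)]
  congr 1
  rw [myZeroLocus_mul, myZeroLocus_mul]
  apply Set.Subset.antisymm
  · rintro x (hx | hx)
    · by_cases hf : eval x (theF g d hgd) = 0
      · right
        intro p hp
        rw [Ideal.mem_span_singleton] at hp
        obtain ⟨q, rfl⟩ := hp
        rw [_root_.map_mul]
        change eval x _ * eval x q = 0
        rw [hf, zero_mul]
      · exact Or.inl (key_zeroLocus g d hg hgd x hx hf)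
    · exact Or.inr hx
  · rintro x (hx | hx)
    · exact Or.inl (MvPolynomial.zeroLocus_anti_mono (myJ_le_I g d hgd) hx)
    · exact Or.inr hx
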